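/- arXiv:1511.03033 — 3 statements merged into one kernel-verified Lean document; each statement's English description precedes it below -/
import Mathlib

section
/- Let V be a reflexive Banach space, K ⊆ V a closed convex set containing 0, Y ⊆ V a closed subspace, and g ∈ V*. Assume (A1): for any sequence {v_n} ⊆ Y∩K with |v_n| → 0 (where |·| is a continuous seminorm with kernel Y), v_n ⇀ v weakly, and ‖v_n‖ ≥ η > 0, there is a subsequence converging strongly to v. If ⟨g, y⟩ < 0 for all y ∈ (Y∩K)\{0} and the interior of the barrier cone B(Y∩K) is nonempty, then g lies in the interior of B(Y∩K). -/
open Filter Topology Set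

section Aux

variable {V : Type*} [NormedAddCommGroup V] [NormedSpace ℝ V]

lemma auxNormJ (x : V) : ‖NormedSpace.inclusionInDoubleDual ℝ V x‖ = ‖x‖ :=
  (NormedSpace.inclusionInDoubleDualLi ℝ (E := V)).norm_map x

lemma auxIsCompactBall
    (hrefl : Function.Surjective (NormedSpace.inclusionInDoubleDual ℝ V)) (r : ℝ) :
    IsCompact (toWeakSpace ℝ V '' Metric.closedBall (0 : V) r) := by
  set J := NormedSpace.inclusionInDoubleDual ℝ V with hJ
  have hJinj : Function.Injective J := by
    intro a b hab
    have h1 : ‖J (a - b)‖ = 0 := by rw [map_sub, hab]; simp; exact ContinuousLinearMap.opNorm_zero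
    rw [hJ, auxNormJ, norm_eq_zero, sub_eq_zero] at h1
    exact h1
  set Φ : StrongDual ℝ (StrongDual ℝ V) → V := Function.surjInv hrefl with hΦ
  have hJΦ : ∀ a, J (Φ a) = a := fun a => Function.surjInv_eq hrefl a
  have hΦJ : ∀ x, Φ (J x) = x := fun x => hJinj (by rw [hJΦ])
  have hcont : Continuous (fun a : WeakDual ℝ (StrongDual ℝ V) =>
      (toWeakSpace ℝ V (Φ a) : WeakSpace ℝ V)) := by
    apply WeakBilin.continuous_of_continuous_eval
    intro y
    have hkey : (fun a : WeakDual ℝ (StrongDual ℝ V) =>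
        (topDualPairing ℝ V).flip (toWeakSpace ℝ V (Φ a)) y) = fun a => a y := by
      funext a
      show y (Φ a) = a y
      conv_rhs => rw [← hJΦ a]
      rfl
    rw [hkey]
    exact WeakDual.eval_continuous y
  have hcomp := (WeakDual.isCompact_closedBall (𝕜 := ℝ)
    (0 : StrongDual ℝ (StrongDual ℝ V)) r).image hcont
  have hset : Φ '' (⇑WeakDual.toStrongDual ⁻¹' Metric.closedBall 0 r)
      = Metric.closedBall (0 : V) r := by
    ext x
    constructor
    · rintro ⟨a, ha, rfl⟩
      have ha' : ‖WeakDual.toStrongDual a‖ ≤ r := (mem_closedBall_zero_iff (E := StrongDual ℝ (StrongDual ℝ V))).mp ha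
      have h2 : ‖Φ a‖ = ‖WeakDual.toStrongDual a‖ := by
        rw [← auxNormJ (Φ a)]
        exact congrArg norm (hJΦ a)
      exact mem_closedBall_zero_iff.mpr (by rw [h2]; exact ha')
    · intro hx
      have hx' : ‖x‖ ≤ r := mem_closedBall_zero_iff.mp hx
      exact ⟨J x, (mem_closedBall_zero_iff (E := StrongDual ℝ (StrongDual ℝ V))).mpr (le_trans (le_of_eq (auxNormJ x)) hx'), hΦJ x⟩
  have hset2 : (fun a : WeakDual ℝ (StrongDual ℝ V) => (toWeakSpace ℝ V (Φ a)))
      '' (⇑WeakDual.toStrongDual ⁻¹' Metric.closedBall 0 r)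
      = toWeakSpace ℝ V '' Metric.closedBall (0 : V) r := by
    rw [← hset, Set.image_image]
    rfl
  rwa [hset2] at hcomp

lemma auxWeaklyClosed {C : Set V} (hC : Convex ℝ C) (hCcl : IsClosed C) :
    IsClosed (toWeakSpace ℝ V '' C) := by
  have h := hC.toWeakSpace_closure (𝕜 := ℝ)
  rw [hCcl.closure_eq] at h
  rw [h]
  exact isClosed_closure

end Aux

/-- Proposition 1: in a reflexive Banach space, under the compactness condition
(A1), if `⟨g, y⟩ < 0` for all nonzero `y ∈ Y ∩ K` and the barrier cone of
`Y ∩ K` has nonempty interior, then `g` lies in the interior of that barrier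
cone. Here `Y` is the kernel of the continuous seminorm `p` and `K` is closed
convex with `0 ∈ K`. -/
theorem mem_interior_barrierCone_of_sign_condition
    {V : Type*} [NormedAddCommGroup V] [NormedSpace ℝ V] [CompleteSpace V]
    (hrefl : Function.Surjective (NormedSpace.inclusionInDoubleDual ℝ V))
    (p : Seminorm ℝ V) (hp : Continuous p)
    (Y : Set V) (hY : Y = {v : V | p v = 0})
    (K : Set V) (hKcl : IsClosed K) (hKconv : Convex ℝ K) (h0K : (0 : V) ∈ K)
    (hA1 : ∀ (v : ℕ → V) (w : V) (η : ℝ), 0 < η →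
      (∀ n, v n ∈ Y ∩ K) →
      Tendsto (fun n => p (v n)) atTop (nhds 0) →
      (∀ f : V →L[ℝ] ℝ, Tendsto (fun n => f (v n)) atTop (nhds (f w))) →
      (∀ n, η ≤ ‖v n‖) →
      ∃ φ : ℕ → ℕ, StrictMono φ ∧ Tendsto (fun k => v (φ k)) atTop (nhds w))
    (g : V →L[ℝ] ℝ)
    (hsign : ∀ y ∈ Y ∩ K, y ≠ 0 → g y < 0)
    (hint : (interior {h : V →L[ℝ] ℝ | ∃ M : ℝ, ∀ v ∈ Y ∩ K, h v ≤ M}).Nonempty) :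
    g ∈ interior {h : V →L[ℝ] ℝ | ∃ M : ℝ, ∀ v ∈ Y ∩ K, h v ≤ M} := by
  obtain ⟨h₀, hh₀⟩ := hint
  set S : Set V := Y ∩ K with hSdef
  have hp0 : ∀ v ∈ S, p v = 0 := fun v hv => by
    have h1 := hv.1; rw [hY] at h1; exact h1
  have h0Y : (0 : V) ∈ Y := by rw [hY]; simp
  have h0S : (0 : V) ∈ S := ⟨h0Y, h0K⟩
  have hYconv : Convex ℝ Y := by
    rw [hY]
    intro x hx y hy a b ha hb hab
    simp only [Set.mem_setOf_eq] at hx hy ⊢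
    refine le_antisymm ?_ (apply_nonneg p _)
    calc p (a • x + b • y) ≤ p (a • x) + p (b • y) := map_add_le_add p _ _
      _ = ‖a‖ * p x + ‖b‖ * p y := by rw [map_smul_eq_mul, map_smul_eq_mul]
      _ = 0 := by rw [hx, hy]; ring
  have hSconv : Convex ℝ S := hYconv.inter hKconv
  have hScl : IsClosed S := by
    have hYcl : IsClosed Y := by rw [hY]; exact isClosed_eq hp continuous_const
    exact hYcl.inter hKcl
  have hgle : ∀ v ∈ S, g v ≤ 0 := by
    intro v hv
    rcases eq_or_ne v 0 with rfl | hne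
    · simp
    · exact (hsign v hv hne).le
  by_cases hkey : ∃ n : ℕ, ∀ v ∈ S, g v ≤ h₀ v / ((n : ℝ) + 1) + ((n : ℝ) + 1) * (1 + ‖h₀‖)
  · obtain ⟨n, hn⟩ := hkey
    obtain ⟨ε, hε, hball⟩ := Metric.isOpen_iff.mp isOpen_interior h₀ hh₀
    set a : ℝ := (n : ℝ) + 1 with hadef
    have hapos : (0 : ℝ) < a := by positivity
    refine mem_interior.mpr ⟨Metric.ball g (ε / a), ?_, Metric.isOpen_ball,
      Metric.mem_ball_self (by positivity)⟩
    intro h' hh'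
    have hh'n : ‖h' - g‖ < ε / a := by
      rw [Metric.mem_ball, dist_eq_norm] at hh'; exact hh'
    set f : V →L[ℝ] ℝ := h₀ + a • (h' - g) with hf
    have hfball : f ∈ Metric.ball h₀ ε := by
      rw [Metric.mem_ball, dist_eq_norm]
      have h1 : f - h₀ = a • (h' - g) := by rw [hf]; abel
      have h2 : ‖a • (h' - g)‖ = ‖a‖ * ‖h' - g‖ := norm_smul a (h' - g)
      rw [h1, h2, Real.norm_eq_abs, abs_of_pos hapos]
      calc a * ‖h' - g‖ < a * (ε / a) := by
            exact mul_lt_mul_of_pos_left hh'n hapos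
        _ = ε := by field_simp
    obtain ⟨M, hM⟩ := interior_subset (hball hfball)
    refine ⟨a * (1 + ‖h₀‖) + M / a, ?_⟩
    intro v hv
    have h1 := hn v hv
    have h2 := hM v hv
    have heq : f v = h₀ v + a * (h' v - g v) := by
      rw [hf]; simp [ContinuousLinearMap.add_apply, ContinuousLinearMap.smul_apply,
        ContinuousLinearMap.sub_apply, smul_eq_mul]
    have h5 : a * g v ≤ h₀ v + a * (a * (1 + ‖h₀‖)) := by
      have h3 := mul_le_mul_of_nonneg_left h1 hapos.le
      rw [mul_add, mul_div_cancel₀ _ hapos.ne'] at h3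
      linarith
    have heq' : a * h' v = f v - h₀ v + a * g v := by rw [heq]; ring
    have h6 : a * h' v ≤ M + a * (a * (1 + ‖h₀‖)) := by linarith
    have h7 : h' v ≤ (M + a * (a * (1 + ‖h₀‖))) / a := by
      rw [le_div_iff₀ hapos]; linarith
    calc h' v ≤ (M + a * (a * (1 + ‖h₀‖))) / a := h7
      _ = a * (1 + ‖h₀‖) + M / a := by field_simp; ring
  · exfalso
    push_neg at hkey
    choose v hvS hv using hkey
    have hnorm : ∀ n : ℕ, ((n : ℝ) + 1) ^ 2 < ‖v n‖ := by
      intro n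
      have hapos : (0 : ℝ) < (n : ℝ) + 1 := by positivity
      have hgv : g (v n) ≤ 0 := hgle _ (hvS n)
      have h1 := hv n
      have hbound : -(‖h₀‖ * ‖v n‖) ≤ h₀ (v n) := by
        have h2 := h₀.le_opNorm (v n)
        have h3 : |h₀ (v n)| ≤ ‖h₀‖ * ‖v n‖ := h2
        linarith [neg_abs_le (h₀ (v n))]
      have h3 : h₀ (v n) / ((n : ℝ) + 1) < g (v n) - ((n : ℝ) + 1) * (1 + ‖h₀‖) := by
        linarith
      have h4 : h₀ (v n) < ((n : ℝ) + 1) * (g (v n) - ((n : ℝ) + 1) * (1 + ‖h₀‖)) := by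
        rw [div_lt_iff₀ hapos] at h3
        nlinarith
      have h5 : ((n : ℝ) + 1) ^ 2 * (1 + ‖h₀‖) < -(h₀ (v n)) := by nlinarith
      have h6 : ((n : ℝ) + 1) ^ 2 * (1 + ‖h₀‖) < (1 + ‖h₀‖) * ‖v n‖ := by
        nlinarith [norm_nonneg (v n)]
      nlinarith [norm_nonneg h₀]
    have hc1 : ∀ n : ℕ, 1 ≤ ‖v n‖ := by
      intro n
      have h1 := hnorm n
      have h2 : (0 : ℝ) ≤ (n : ℝ) := Nat.cast_nonneg n
      nlinarith
    have hcpos : ∀ n : ℕ, 0 < ‖v n‖ := fun n => lt_of_lt_of_le one_pos (hc1 n)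
    set w : ℕ → V := fun n => ‖v n‖⁻¹ • v n with hw
    have hwS : ∀ n, w n ∈ S := by
      intro n
      have hinv0 : (0 : ℝ) ≤ ‖v n‖⁻¹ := inv_nonneg.mpr (norm_nonneg _)
      have hinv1 : ‖v n‖⁻¹ ≤ 1 := by
        rw [inv_le_one_iff₀]; right; exact hc1 n
      have hmem := hSconv (hvS n) h0S (a := ‖v n‖⁻¹) (b := 1 - ‖v n‖⁻¹) hinv0
        (by linarith) (by ring)
      simpa using hmem
    have hwnorm : ∀ n, ‖w n‖ = 1 := by
      intro n
      rw [hw]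
      simp only [norm_smul, Real.norm_eq_abs, abs_inv, abs_of_pos (hcpos n)]
      exact inv_mul_cancel₀ (hcpos n).ne'
    have hglb : ∀ n : ℕ, -‖h₀‖ / ((n : ℝ) + 1) ≤ g (w n) := by
      intro n
      have hapos : (0 : ℝ) < (n : ℝ) + 1 := by positivity
      have h1 := le_of_lt (hv n)
      have hbound : -(‖h₀‖ * ‖v n‖) ≤ h₀ (v n) := by
        have h3 : |h₀ (v n)| ≤ ‖h₀‖ * ‖v n‖ := h₀.le_opNorm (v n)
        linarith [neg_abs_le (h₀ (v n))]
      have hgw : g (w n) = ‖v n‖⁻¹ * g (v n) := by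
        rw [hw]; simp [map_smul]
      rw [hgw]
      have h3 : -‖h₀‖ * ‖v n‖ / ((n : ℝ) + 1) ≤ g (v n) := by
        have h4 : -(‖h₀‖ * ‖v n‖) / ((n : ℝ) + 1) ≤ h₀ (v n) / ((n : ℝ) + 1) := by
          gcongr
        have h5 : (0 : ℝ) ≤ ((n : ℝ) + 1) * (1 + ‖h₀‖) := by positivity
        calc -‖h₀‖ * ‖v n‖ / ((n : ℝ) + 1) = -(‖h₀‖ * ‖v n‖) / ((n : ℝ) + 1) := by ring
          _ ≤ h₀ (v n) / ((n : ℝ) + 1) := h4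
          _ ≤ g (v n) := by linarith
      have h4 : ‖v n‖⁻¹ * (-‖h₀‖ * ‖v n‖ / ((n : ℝ) + 1)) ≤ ‖v n‖⁻¹ * g (v n) :=
        mul_le_mul_of_nonneg_left h3 (inv_nonneg.mpr (norm_nonneg _))
      have hvne : ‖v n‖ ≠ 0 := (hcpos n).ne'
      have hane : ((n : ℝ) + 1) ≠ 0 := hapos.ne'
      calc -‖h₀‖ / ((n : ℝ) + 1) = ‖v n‖⁻¹ * (-‖h₀‖ * ‖v n‖ / ((n : ℝ) + 1)) := by
            field_simp
        _ ≤ ‖v n‖⁻¹ * g (v n) := h4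
    have hgub : ∀ n, g (w n) ≤ 0 := fun n => hgle _ (hwS n)
    have hlow : Tendsto (fun n : ℕ => -‖h₀‖ / ((n : ℝ) + 1)) atTop (nhds 0) :=
      Tendsto.div_atTop tendsto_const_nhds
        (tendsto_atTop_add_const_right _ 1 tendsto_natCast_atTop_atTop)
    have hg0 : Tendsto (fun n => g (w n)) atTop (nhds 0) :=
      tendsto_of_tendsto_of_tendsto_of_le_of_le hlow tendsto_const_nhds hglb hgub
    -- the weakly compact set
    have hTcomp : IsCompact (toWeakSpace ℝ V '' (S ∩ Metric.closedBall 0 1)) := by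
      rw [Set.image_inter (toWeakSpace ℝ V).injective]
      exact (auxIsCompactBall hrefl 1).inter_left (auxWeaklyClosed hSconv hScl)
    set u : ℕ → WeakSpace ℝ V := fun n => toWeakSpace ℝ V (w n) with hu
    have humem : ∀ n, u n ∈ toWeakSpace ℝ V '' (S ∩ Metric.closedBall 0 1) := fun n =>
      ⟨w n, ⟨hwS n, by simp [mem_closedBall_zero_iff, hwnorm n]⟩, rfl⟩
    have huniq : ∀ x ∈ toWeakSpace ℝ V '' (S ∩ Metric.closedBall 0 1),
        MapClusterPt x atTop u → x = toWeakSpace ℝ V 0 := by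
      rintro x ⟨x₀, ⟨hx₀S, -⟩, rfl⟩ hcl
      have hGcont : Continuous (fun z : WeakSpace ℝ V => g ((toWeakSpace ℝ V).symm z)) :=
        WeakBilin.eval_continuous _ g
      have h1 := hcl.continuousAt_comp
        (f := fun z : WeakSpace ℝ V => g ((toWeakSpace ℝ V).symm z)) hGcont.continuousAt
      have h4 : ClusterPt (g x₀) (nhds 0) := h1.clusterPt.mono hg0
      have h3 : g x₀ = 0 := eq_of_nhds_neBot h4
      have hx0 : x₀ = 0 := by
        by_contra hne
        exact absurd h3 (ne_of_lt (hsign x₀ hx₀S hne))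
      rw [hx0]
    have hconv : Tendsto u atTop (nhds (toWeakSpace ℝ V 0)) :=
      hTcomp.tendsto_nhds_of_unique_mapClusterPt (Eventually.of_forall humem) huniq
    have hweak : ∀ f : V →L[ℝ] ℝ, Tendsto (fun n => f (w n)) atTop (nhds (f 0)) := by
      intro f
      have hFcont : Continuous (fun z : WeakSpace ℝ V => f ((toWeakSpace ℝ V).symm z)) :=
        WeakBilin.eval_continuous _ f
      have h1 := (hFcont.tendsto (toWeakSpace ℝ V 0)).comp hconv
      simpa [Function.comp_def, hu] using h1
    have hptend : Tendsto (fun n => p (w n)) atTop (nhds 0) := by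
      have hz : (fun n => p (w n)) = fun _ => (0 : ℝ) := funext fun n => hp0 _ (hwS n)
      rw [hz]; exact tendsto_const_nhds
    obtain ⟨φ, hφ, hφconv⟩ := hA1 w 0 1 one_pos hwS hptend hweak (fun n => (hwnorm n).ge)
    have hlim : Tendsto (fun k => ‖w (φ k)‖) atTop (nhds 0) := by
      simpa [Function.comp_def] using (continuous_norm.tendsto (0 : V)).comp hφconv
    have hone : Tendsto (fun _ : ℕ => (1 : ℝ)) atTop (nhds 0) := by
      convert hlim using 1
      funext k
      rw [hwnorm]
    exact absurd (tendsto_nhds_unique hone tendsto_const_nhds) zero_ne_one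
end

section
/- Let K be a nonempty convex cone in a normed space V and g ∈ V*. If g belongs to the interior of the barrier cone B(K), then ⟨g, y⟩ < 0 for every y ∈ K \ {0}. -/
open Filter Topology Set

set_option synthInstance.maxHeartbeats 1000000
set_option maxHeartbeats 1000000

/-- Proposition 2: if `K` is a nonempty convex cone in a normed space and `g`
belongs to the interior of the barrier cone of `K`, then `⟨g, y⟩ < 0` for every
`y ∈ K \ {0}`. -/
theorem neg_of_mem_interior_barrierCone
    {V : Type*} [NormedAddCommGroup V] [NormedSpace ℝ V]
    (K : Set V) (hne : K.Nonempty) (hconv : Convex ℝ K)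
    (hcone : ∀ (c : ℝ), 0 ≤ c → ∀ v ∈ K, c • v ∈ K)
    (g : V →L[ℝ] ℝ)
    (hg : g ∈ interior {h : V →L[ℝ] ℝ | ∃ M : ℝ, ∀ v ∈ K, h v ≤ M}) :
    ∀ y ∈ K, y ≠ 0 → g y < 0 := by
  intro y hy hy0
  rw [mem_interior_iff_mem_nhds, Metric.mem_nhds_iff] at hg
  obtain ⟨ε, hε, hball⟩ := hg
  obtain ⟨f, hf1, hfy⟩ := exists_dual_vector ℝ y (norm_ne_zero_iff.mpr hy0)
  -- h := g + (ε/2) • f is in the ball around g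
  have hmem : g + (ε/2) • f ∈ Metric.ball g ε := by
    simp only [Metric.mem_ball, dist_eq_norm]
    have : g + (ε/2) • f - g = (ε/2) • f := by abel
    rw [this]
    have h2 : ‖(ε/2) • f‖ ≤ ‖(ε/2 : ℝ)‖ * ‖f‖ := ContinuousLinearMap.opNorm_smul_le _ _
    rw [hf1, Real.norm_eq_abs, abs_of_pos (by linarith : (0:ℝ) < ε/2)] at h2
    linarith
  obtain ⟨M, hM⟩ := hball hmem
  -- key: a := g y + (ε/2) * ‖y‖ satisfies c * a ≤ M for all c ≥ 0
  set a : ℝ := g y + (ε/2) * ‖y‖ with ha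
  have key : ∀ c : ℝ, 0 ≤ c → c * a ≤ M := by
    intro c hc
    have := hM (c • y) (hcone c hc y hy)
    simpa [ha, map_smul, smul_eq_mul, hfy, mul_add] using this
  have hale : a ≤ 0 := by
    by_contra h
    push_neg at h
    have hc : (0:ℝ) ≤ (|M| + 1) / a := div_nonneg (by positivity) h.le
    have := key _ hc
    rw [div_mul_cancel₀ _ h.ne'] at this
    have : M < |M| + 1 := lt_of_le_of_lt (le_abs_self M) (by linarith)
    linarith [key ((|M|+1)/a) hc, (div_mul_cancel₀ (|M|+1) h.ne' : (|M|+1)/a * a = |M|+1)]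
  have hy' : 0 < ‖y‖ := norm_pos_iff.mpr hy0
  have : g y ≤ -(ε/2) * ‖y‖ := by rw [ha] at hale; linarith
  nlinarith
end

section
/- Under the hypotheses of the semicoercive existence theorem, the coercivity-type condition holds: there exists R > 0 such that ⟨Av, −v⟩ + φ(v,0) + ⟨g, v⟩ < 0 for all v ∈ K with ‖v‖ = R. -/
open Filter Topology Set

open NormedSpace

lemma mem_of_forall_dual_eq_zero {V : Type*} [NormedAddCommGroup V] [NormedSpace ℝ V]
    (W : Submodule ℝ V) (hWc : IsClosed (W : Set V)) (v : V)
    (h : ∀ f : V →L[ℝ] ℝ, (∀ u ∈ W, f u = 0) → f v = 0) : v ∈ W := by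
  by_contra hv
  obtain ⟨f, u, hfa, hfv⟩ := geometric_hahn_banach_closed_point W.convex hWc hv
  have hker : ∀ a ∈ W, f a = 0 := by
    intro a ha
    by_contra hfa0
    have h1 : f (((u + 1) / f a) • a) < u := hfa _ (W.smul_mem _ ha)
    rw [map_smul, smul_eq_mul, div_mul_cancel₀ _ hfa0] at h1
    linarith
  have h0 : (0:ℝ) < u := by simpa using hfa 0 W.zero_mem
  have := h f hker
  linarith

lemma exists_norming_family {V : Type*} [NormedAddCommGroup V] [NormedSpace ℝ V]
    (S : Set V) (hS : TopologicalSpace.IsSeparable S) :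
    ∃ f : ℕ → (V →L[ℝ] ℝ), ∀ z ∈ S, (∀ n, f n z = 0) → z = 0 := by
  obtain ⟨T, Tcount, hT⟩ := hS
  obtain ⟨q, hq⟩ := (Tcount.insert 0).exists_eq_range (insert_nonempty _ _)
  choose f hf1 hf2 using fun n => exists_dual_vector'' ℝ (q n)
  refine ⟨f, fun z hz hz0 => ?_⟩
  have hzc : z ∈ closure (range q) := by
    rw [← hq]
    exact closure_mono (subset_insert _ _) (hT hz)
  rw [← norm_le_zero_iff]
  by_contra hpos
  push_neg at hpos
  obtain ⟨y, ⟨n, rfl⟩, hd⟩ := Metric.mem_closure_iff.mp hzc (‖z‖/3) (by linarith)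
  have hfq : f n (q n) = ‖q n‖ := by exact_mod_cast hf2 n
  have h1 : ‖q n‖ ≤ ‖q n - z‖ := by
    calc ‖q n‖ = f n (q n - z) := by rw [map_sub, hz0 n, hfq, sub_zero]
    _ ≤ ‖f n (q n - z)‖ := le_abs_self _
    _ ≤ ‖f n‖ * ‖q n - z‖ := (f n).le_opNorm _
    _ ≤ 1 * ‖q n - z‖ := mul_le_mul_of_nonneg_right (hf1 n) (norm_nonneg _)
    _ = ‖q n - z‖ := one_mul _
  have h2 : ‖q n - z‖ < ‖z‖ / 3 := by rwa [dist_comm, dist_eq_norm] at hd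
  have h3 : ‖z‖ ≤ ‖z - q n‖ + ‖q n‖ := by simpa using norm_add_le (z - q n) (q n)
  have h4 : ‖z - q n‖ = ‖q n - z‖ := norm_sub_rev _ _
  linarith

lemma weak_seq_compact {V : Type*} [NormedAddCommGroup V] [NormedSpace ℝ V] [CompleteSpace V]
    (hrefl : Function.Surjective (inclusionInDoubleDual ℝ V))
    (w : ℕ → V) (hw : ∀ n, ‖w n‖ ≤ 1) :
    ∃ (x : V) (ψ : ℕ → ℕ), StrictMono ψ ∧
      ∀ f : V →L[ℝ] ℝ, Tendsto (fun k => f (w (ψ k))) atTop (𝓝 (f x)) := by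
  classical
  set W : Submodule ℝ V := (Submodule.span ℝ (range w)).topologicalClosure with hWdef
  have hWc : IsClosed (W : Set V) := Submodule.isClosed_topologicalClosure _
  have hWsep : TopologicalSpace.IsSeparable (W : Set V) := by
    have : TopologicalSpace.IsSeparable (Submodule.span ℝ (range w) : Set V) :=
      (countable_range w).isSeparable.span
    simpa [hWdef, Submodule.topologicalClosure_coe] using this.closure
  obtain ⟨f, hf⟩ := exists_norming_family (W : Set V) hWsep
  have hwW : ∀ n, w n ∈ W :=
    fun n => Submodule.le_topologicalClosure _ (Submodule.subset_span (mem_range_self n))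
  set J : V →L[ℝ] StrongDual ℝ (StrongDual ℝ V) := inclusionInDoubleDual ℝ V with hJ
  set B : Set (WeakDual ℝ (StrongDual ℝ V)) :=
    WeakDual.toStrongDual ⁻¹' Metric.closedBall (0 : StrongDual ℝ (StrongDual ℝ V)) 1 with hBdef
  have hB : IsCompact B := WeakDual.isCompact_closedBall (0 : StrongDual ℝ (StrongDual ℝ V)) 1
  set S : Set (WeakDual ℝ (StrongDual ℝ V)) :=
    {F | ∀ g : StrongDual ℝ V, (∀ u ∈ W, g u = 0) → F g = 0} with hSdef
  have hScl : IsClosed S := by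
    have hSeq : S = ⋂ (g : StrongDual ℝ V) (_ : ∀ u ∈ W, g u = 0),
        {F : WeakDual ℝ (StrongDual ℝ V) | F g = 0} := by
      ext F; simp [hSdef]
    rw [hSeq]
    exact isClosed_iInter fun g => isClosed_iInter fun _ =>
      isClosed_eq (WeakDual.eval_continuous g) continuous_const
  set C : Set (WeakDual ℝ (StrongDual ℝ V)) := B ∩ S with hCdef
  have hC : IsCompact C := hB.inter_right hScl
  set x : ℕ → WeakDual ℝ (StrongDual ℝ V) := fun n => StrongDual.toWeakDual (J (w n)) with hx
  have hback : ∀ G : StrongDual ℝ (StrongDual ℝ V), WeakDual.toStrongDual (StrongDual.toWeakDual G) = G :=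
    fun G => rfl
  have happ : ∀ (G : StrongDual ℝ (StrongDual ℝ V)) (g : StrongDual ℝ V), (StrongDual.toWeakDual G) g = G g :=
    fun G g => rfl
  have hxC : ∀ n, x n ∈ C := by
    intro n
    constructor
    · simp only [hBdef, mem_preimage, Metric.mem_closedBall, dist_zero_right, hx, hback]
      exact (dist_zero_right (J (w n) : StrongDual ℝ (StrongDual ℝ V))).trans_le ((double_dual_bound ℝ V (w n)).trans (hw n))
    · intro g hg
      show (J (w n)) g = 0
      rw [dual_def]
      exact hg _ (hwW n)
  have hCrep : ∀ F ∈ C, ∃ v ∈ W, StrongDual.toWeakDual (J v) = F := by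
    rintro F ⟨-, hFS⟩
    obtain ⟨v, hv⟩ := hrefl (WeakDual.toStrongDual F)
    refine ⟨v, ?_, ?_⟩
    · refine mem_of_forall_dual_eq_zero W hWc v fun g hg => ?_
      have h1 : (J v) g = F g := by rw [hv]; rfl
      have h2 : (J v) g = g v := dual_def ℝ V v g
      rw [← h2, h1]
      exact hFS g hg
    · have : StrongDual.toWeakDual (WeakDual.toStrongDual F) = F := rfl
      rw [← hv] at this
      exact this
  -- embed `C` into `ℝ^ℕ` via the norming family
  set e : WeakDual ℝ (StrongDual ℝ V) → (ℕ → ℝ) := fun F n => F (f n) with he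
  have hecont : Continuous e := continuous_pi fun n => WeakDual.eval_continuous (f n)
  have heinj : ∀ F ∈ C, ∀ G ∈ C, e F = e G → F = G := by
    intro F hF G hG hFG
    obtain ⟨v, hvW, rfl⟩ := hCrep F hF
    obtain ⟨u, huW, rfl⟩ := hCrep G hG
    have hsub : v - u ∈ W := W.sub_mem hvW huW
    have hz : v - u = 0 := by
      refine hf _ hsub fun n => ?_
      have h1 : e (StrongDual.toWeakDual (J v)) n = e (StrongDual.toWeakDual (J u)) n := by rw [hFG]
      have h2 : f n v = f n u := h1
      rw [map_sub, h2, sub_self]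
    have : v = u := by
      have := sub_eq_zero.mp hz
      exact this
    rw [this]
  obtain ⟨ℓ, hℓ, ψ, hψ, hconv⟩ :=
    (hC.image hecont).isSeqCompact (x := fun n => e (x n))
      (fun n => mem_image_of_mem e (hxC n))
  obtain ⟨F₀, hF₀C, rfl⟩ := hℓ
  haveI : CompactSpace C := isCompact_iff_compactSpace.mp hC
  set eC : C → (ℕ → ℝ) := fun F => e F with heC
  have heCcont : Continuous eC := hecont.comp continuous_subtype_val
  have heCinj : Function.Injective eC := fun F G h => Subtype.ext (heinj F F.2 G G.2 h)
  have hemb := (heCcont.isClosedEmbedding heCinj).isEmbedding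
  have hsub : Tendsto (fun k => (⟨x (ψ k), hxC (ψ k)⟩ : C)) atTop (𝓝 ⟨F₀, hF₀C⟩) := by
    rw [hemb.tendsto_nhds_iff]
    exact hconv
  have hxconv : Tendsto (fun k => x (ψ k)) atTop (𝓝 F₀) :=
    (continuous_subtype_val.tendsto _).comp hsub
  obtain ⟨v₀, hv₀W, rfl⟩ := hCrep F₀ hF₀C
  refine ⟨v₀, ψ, hψ, fun g => ?_⟩
  have hfin := ((WeakDual.eval_continuous (𝕜 := ℝ) (E := StrongDual ℝ V) g).tendsto _).comp hxconv
  exact hfin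

/-- Key lemma in the proof of the semicoercive existence theorem: under its
hypotheses there exists `R > 0` such that
`⟨Av, -v⟩ + φ(v,0) + ⟨g, v⟩ < 0` for all `v ∈ K` with `‖v‖ = R`. -/
theorem semicoercive_VI_coercivity_condition
    {V : Type*} [NormedAddCommGroup V] [NormedSpace ℝ V] [CompleteSpace V]
    (hrefl : Function.Surjective (NormedSpace.inclusionInDoubleDual ℝ V))
    (p : Seminorm ℝ V) (hp : Continuous p)
    (Y : Set V) (hY : Y = {v : V | p v = 0})
    (A : V →L[ℝ] (V →L[ℝ] ℝ)) (c₀ : ℝ) (hc₀ : 0 < c₀)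
    (hsemi : ∀ v : V, c₀ * (p v) ^ 2 ≤ A v v)
    (K : Set V) (hKcl : IsClosed K) (hKconv : Convex ℝ K) (h0K : (0 : V) ∈ K)
    (g : V →L[ℝ] ℝ)
    (φ : V → V → ℝ)
    (hpm : ∀ (u : ℕ → V) (u₀ : V),
      (∀ f : V →L[ℝ] ℝ, Tendsto (fun n => f (u n)) atTop (nhds (f u₀))) →
      0 ≤ Filter.liminf (fun n => φ (u n) u₀) atTop →
      ∀ v : V, Filter.limsup (fun n => φ (u n) v) atTop ≤ φ u₀ v)
    (husc : ∀ (v : V) (W : Submodule ℝ V), FiniteDimensional ℝ W →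
      UpperSemicontinuousOn (fun u => φ u v) (K ∩ (W : Set V)))
    (c : ℝ) (hc : 0 < c) (hφ0 : ∀ v : V, φ v 0 ≤ c * ‖v‖)
    (hA1 : ∀ (v : ℕ → V) (w : V) (η : ℝ), 0 < η →
      Tendsto (fun n => p (v n)) atTop (nhds 0) →
      (∀ f : V →L[ℝ] ℝ, Tendsto (fun n => f (v n)) atTop (nhds (f w))) →
      (∀ n, η ≤ ‖v n‖) →
      ∃ ψ : ℕ → ℕ, StrictMono ψ ∧ Tendsto (fun k => v (ψ k)) atTop (nhds w))
    (hA2 : Bornology.IsBounded (Y ∩ K) ∨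
      ∀ y ∈ Y ∩ K, ‖y‖ = 1 → g y < -c) :
    ∃ R : ℝ, 0 < R ∧ ∀ v ∈ K, ‖v‖ = R → A v (-v) + φ v 0 + g v < 0 := by
  by_contra hcon
  push_neg at hcon
  -- extract a sequence `v n ∈ K` with `‖v n‖ = n + 1` violating the inequality
  have hex : ∀ n : ℕ, ∃ v ∈ K, ‖v‖ = (n : ℝ) + 1 ∧ A v v ≤ φ v 0 + g v := by
    intro n
    obtain ⟨v, hvK, hvn, hge⟩ := hcon ((n : ℝ) + 1) (by positivity)
    refine ⟨v, hvK, hvn, ?_⟩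
    have : A v (-v) = -(A v v) := map_neg (A v) v
    linarith [hge, this ▸ hge]
  choose v hvK hvnorm hvineq using hex
  -- basic bounds
  have hnpos : ∀ n : ℕ, (0:ℝ) < (n:ℝ) + 1 := fun n => by positivity
  have hbound : ∀ n, A (v n) (v n) ≤ (c + ‖g‖) * ((n:ℝ) + 1) := by
    intro n
    have h1 : φ (v n) 0 ≤ c * ‖v n‖ := hφ0 (v n)
    have h2 : g (v n) ≤ ‖g‖ * ‖v n‖ := le_trans (le_abs_self _) (g.le_opNorm _)
    calc A (v n) (v n) ≤ φ (v n) 0 + g (v n) := hvineq n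
    _ ≤ c * ‖v n‖ + ‖g‖ * ‖v n‖ := add_le_add h1 h2
    _ = (c + ‖g‖) * ((n:ℝ) + 1) := by rw [hvnorm n]; ring
  -- normalized sequence
  set w : ℕ → V := fun n => ((n:ℝ) + 1)⁻¹ • v n with hw
  have hwnorm : ∀ n, ‖w n‖ = 1 := by
    intro n
    rw [hw]
    simp only [norm_smul, norm_inv, Real.norm_eq_abs, abs_of_pos (hnpos n), hvnorm n]
    field_simp
  have hwK : ∀ n, w n ∈ K := by
    intro n
    have ha : (0:ℝ) ≤ ((n:ℝ) + 1)⁻¹ := le_of_lt (inv_pos.mpr (hnpos n))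
    have hb : (0:ℝ) ≤ 1 - ((n:ℝ) + 1)⁻¹ := by
      have : ((n:ℝ) + 1)⁻¹ ≤ 1 := by
        rw [inv_le_one_iff₀]; right; linarith
      linarith
    have := hKconv h0K (hvK n) hb ha (by ring)
    simpa [hw] using this
  -- p (w n) → 0
  have hpw : Tendsto (fun n => p (w n)) atTop (𝓝 0) := by
    have hsq : ∀ n, (p (w n))^2 ≤ (c + ‖g‖) / c₀ / ((n:ℝ) + 1) := by
      intro n
      have h1 : c₀ * (p (v n))^2 ≤ (c + ‖g‖) * ((n:ℝ)+1) := le_trans (hsemi (v n)) (hbound n)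
      have h2 : p (w n) = ((n:ℝ)+1)⁻¹ * p (v n) := by
        rw [hw]
        simp [map_smul_eq_mul, abs_of_pos (hnpos n)]
      rw [h2, mul_pow, div_div, le_div_iff₀ (by positivity)]
      have hexp : ((n:ℝ)+1)⁻¹ ^ 2 * p (v n) ^ 2 * (c₀ * ((n:ℝ)+1))
          = c₀ * p (v n)^2 * ((n:ℝ)+1)⁻¹ := by
        field_simp
      rw [hexp]
      calc c₀ * p (v n)^2 * ((n:ℝ)+1)⁻¹ ≤ ((c + ‖g‖) * ((n:ℝ)+1)) * ((n:ℝ)+1)⁻¹ := by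
            apply mul_le_mul_of_nonneg_right h1 (le_of_lt (inv_pos.mpr (hnpos n)))
      _ = c + ‖g‖ := by field_simp
    have hlim : Tendsto (fun n : ℕ => (c + ‖g‖) / c₀ / ((n:ℝ) + 1)) atTop (𝓝 0) := by
      apply Tendsto.div_atTop tendsto_const_nhds
      exact tendsto_atTop_add_const_right _ _ tendsto_natCast_atTop_atTop
    have hsq0 : Tendsto (fun n => (p (w n))^2) atTop (𝓝 0) := by
      refine squeeze_zero (fun n => by positivity) hsq hlim
    have : Tendsto (fun n => Real.sqrt ((p (w n))^2)) atTop (𝓝 (Real.sqrt 0)) :=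
      (Real.continuous_sqrt.tendsto 0).comp hsq0
    simpa [Real.sqrt_sq (apply_nonneg p _)] using this
  -- g (w n) ≥ -c
  have hgw : ∀ n, -c ≤ g (w n) := by
    intro n
    have h0 : (0:ℝ) ≤ A (v n) (v n) :=
      le_trans (by positivity) (hsemi (v n))
    have h1 : -(c * ((n:ℝ)+1)) ≤ g (v n) := by
      have := hvineq n
      have h2 : φ (v n) 0 ≤ c * ‖v n‖ := hφ0 (v n)
      rw [hvnorm n] at h2
      linarith
    have h3 : g (w n) = ((n:ℝ)+1)⁻¹ * g (v n) := by rw [hw]; simp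
    have h4 : -c = ((n:ℝ)+1)⁻¹ * (-(c * ((n:ℝ)+1))) := by field_simp
    rw [h3, h4]
    exact mul_le_mul_of_nonneg_left h1 (le_of_lt (inv_pos.mpr (hnpos n)))
  -- extract a weakly convergent subsequence
  obtain ⟨x, ψ, hψ, hweak⟩ := weak_seq_compact hrefl w (fun n => le_of_eq (hwnorm n))
  -- strong convergence along a further subsequence via (A1)
  obtain ⟨ψ', hψ', hstrong⟩ := hA1 (fun k => w (ψ k)) x 1 one_pos
    (hpw.comp hψ.tendsto_atTop) hweak (fun k => le_of_eq (hwnorm (ψ k)).symm)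
  set σ : ℕ → ℕ := fun j => ψ (ψ' j) with hσ
  have hσmono : StrictMono σ := hψ.comp hψ'
  have hst : Tendsto (fun j => w (σ j)) atTop (𝓝 x) := hstrong
  -- properties of the limit x
  have hxnorm : ‖x‖ = 1 := by
    have h2 : Tendsto (fun j => ‖w (σ j)‖) atTop (𝓝 ‖x‖) := (continuous_norm.tendsto x).comp hst
    have h3 : (fun j => ‖w (σ j)‖) = fun _ => (1:ℝ) := funext fun j => hwnorm (σ j)
    rw [h3] at h2
    exact tendsto_nhds_unique h2 tendsto_const_nhds
  have hpx : p x = 0 := by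
    have h1 : Tendsto (fun j => p (w (σ j))) atTop (𝓝 (p x)) := (hp.tendsto x).comp hst
    have h2 : Tendsto (fun j => p (w (σ j))) atTop (𝓝 0) := hpw.comp hσmono.tendsto_atTop
    exact tendsto_nhds_unique h1 h2
  have hxK : x ∈ K := hKcl.mem_of_tendsto hst (Eventually.of_forall fun j => hwK (σ j))
  have hxY : x ∈ Y := by rw [hY]; exact hpx
  have hgx : -c ≤ g x := by
    have h1 : Tendsto (fun j => g (w (σ j))) atTop (𝓝 (g x)) := (g.continuous.tendsto x).comp hst
    exact ge_of_tendsto h1 (Eventually.of_forall fun j => hgw (σ j))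
  rcases hA2 with hbdd | hneg
  · -- bounded case: the ray through x is unbounded in Y ∩ K
    obtain ⟨M, hM⟩ := isBounded_iff_forall_norm_le.mp hbdd
    have hMx : 1 ≤ M := by
      have := hM x ⟨hxY, hxK⟩; rwa [hxnorm] at this
    set t : ℝ := M + 1 with ht
    have htpos : (0:ℝ) < t := by rw [ht]; linarith
    have htx : t • x ∈ K := by
      have hmem : ∀ᶠ j in atTop, t • w (σ j) ∈ K := by
        filter_upwards [eventually_ge_atTop ⌈t⌉₊] with j hj
        have hjt : t ≤ (σ j : ℝ) + 1 := by
          have h1 : t ≤ (⌈t⌉₊ : ℝ) := Nat.le_ceil t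
          have h2 : (⌈t⌉₊:ℝ) ≤ (j:ℝ) := Nat.cast_le.mpr hj
          have h3 : (j:ℝ) ≤ (σ j : ℝ) := Nat.cast_le.mpr (hσmono.le_apply)
          linarith
        set a : ℝ := t * ((σ j:ℝ)+1)⁻¹ with haa
        have ha : 0 ≤ a := by positivity
        have hab : a ≤ 1 := by
          rw [haa, ← div_eq_mul_inv, div_le_one (hnpos (σ j))]
          exact hjt
        have hmem' := hKconv h0K (hvK (σ j)) (by linarith : (0:ℝ) ≤ 1 - a) ha (by ring)
        have heq : (1 - a) • (0:V) + a • v (σ j) = t • w (σ j) := by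
          rw [smul_zero, zero_add, hw, smul_smul]
        rwa [heq] at hmem'
      exact hKcl.mem_of_tendsto (((continuous_const_smul t).tendsto x).comp hst) hmem
    have htY : t • x ∈ Y := by
      rw [hY]
      show p (t • x) = 0
      rw [map_smul_eq_mul, hpx, mul_zero]
    have hle : ‖t • x‖ ≤ M := hM _ ⟨htY, htx⟩
    rw [norm_smul, hxnorm, mul_one, Real.norm_eq_abs, abs_of_pos htpos] at hle
    rw [ht] at hle
    linarith
  · -- angle condition case
    have := hneg x ⟨hxY, hxK⟩ hxnorm
    linarith
end
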